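/- Let q be a prime power and w = (w_0,...,w_n) a tuple of positive integers. Let K be any field extension of F_q and x = (x_0,...,x_n) a nonzero vector in K^{n+1}. Let v be the sub-tuple of w consisting of those weights w_i for which x_i ≠ 0. Then the stabilizer of x in F_q^× under the weighted action λ ∗ x = (λ^{w_0} x_0, ..., λ^{w_n} x_n) has cardinality gcd(v, q-1), where gcd(v, q-1) denotes the gcd of the entries of v together with q-1. -/

import Mathlib

open scoped Classical

/-- Let `Fq` be a finite field with `q` elements, `K` a field extension of `Fq`,
`w = (w₀, …, wₙ)` a tuple of positive integers, and `x ∈ K^{n+1}` nonzero.  The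
stabilizer of `x` in `Fqˣ` under the weighted action
`λ ∗ x = (λ^{w₀} x₀, …, λ^{wₙ} xₙ)` has cardinality `gcd(v, q - 1)`, where `v`
is the sub-tuple of `w` of weights at indices where `x i ≠ 0`. -/
theorem stmt_1 (q : ℕ) (hq : IsPrimePow q) (Fq : Type*) [Field Fq] [Fintype Fq]
    (hcard : Fintype.card Fq = q) (K : Type*) [Field K] [Algebra Fq K]
    (n : ℕ) (w : Fin (n + 1) → ℕ) (hw : ∀ i, 0 < w i)
    (x : Fin (n + 1) → K) (hx : x ≠ 0) :
    Nat.card {lam : Fqˣ // ∀ i, (algebraMap Fq K (lam : Fq)) ^ (w i) * x i = x i} =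
      Nat.gcd ((Finset.univ.filter fun i => x i ≠ 0).gcd w) (q - 1) := by
  have hq2 : 2 ≤ q := hq.two_le
  have hcardu : Fintype.card Fqˣ = q - 1 := by
    rw [Fintype.card_units, hcard]
  have hq1pos : 0 < q - 1 := by omega
  set S : Finset (Fin (n + 1)) := Finset.univ.filter fun i => x i ≠ 0 with hS
  set d : ℕ := Nat.gcd (S.gcd w) (q - 1) with hd
  have hdq : d ∣ q - 1 := Nat.gcd_dvd_right _ _
  have hdpos : 0 < d := Nat.pos_of_dvd_of_pos hdq hq1pos
  have halg : Function.Injective (algebraMap Fq K) := (algebraMap Fq K).injective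
  -- the stabilizer condition is equivalent to lam ^ d = 1
  have hiff : ∀ lam : Fqˣ,
      (∀ i, (algebraMap Fq K (lam : Fq)) ^ (w i) * x i = x i) ↔ lam ^ d = 1 := by
    intro lam
    constructor
    · intro h
      have hdvd : orderOf lam ∣ d := by
        refine Nat.dvd_gcd ?_ (hcardu ▸ orderOf_dvd_card)
        refine Finset.dvd_gcd fun i hi => ?_
        have hxi : x i ≠ 0 := (Finset.mem_filter.mp hi).2
        have h1 : (algebraMap Fq K (lam : Fq)) ^ (w i) = 1 :=
          mul_right_cancel₀ hxi (by rw [h i, one_mul])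
        have h2 : ((lam : Fq)) ^ (w i) = 1 := by
          apply halg; rw [map_pow, h1, map_one]
        exact orderOf_dvd_of_pow_eq_one (Units.ext (by push_cast; exact h2))
      exact orderOf_dvd_iff_pow_eq_one.mp hdvd
    · intro h i
      by_cases hxi : x i = 0
      · simp [hxi]
      · have hdw : d ∣ w i := by
          refine dvd_trans (Nat.gcd_dvd_left _ _) (Finset.gcd_dvd ?_)
          exact Finset.mem_filter.mpr ⟨Finset.mem_univ i, hxi⟩
        obtain ⟨c, hc⟩ := hdw
        have : lam ^ (w i) = 1 := by rw [hc, pow_mul, h, one_pow]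
        have h2 : ((lam : Fq)) ^ (w i) = 1 := by
          have := congrArg (Units.val) this; push_cast at this; exact this
        rw [← map_pow, h2, map_one, one_mul]
  -- count solutions of lam ^ d = 1 : they form rootsOfUnity d Fq
  have hcount : Nat.card {lam : Fqˣ // lam ^ d = 1} = d := by
    obtain ⟨g, hg⟩ := IsCyclic.exists_generator (α := Fqˣ)
    have horder : orderOf g = q - 1 := by
      rw [orderOf_eq_card_of_forall_mem_zpowers hg, Nat.card_eq_fintype_card, hcardu]
    have hprim : IsPrimitiveRoot g (q - 1) := horder ▸ IsPrimitiveRoot.orderOf g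
    obtain ⟨k, hk⟩ := hdq
    have hprim' : IsPrimitiveRoot (g ^ k) d :=
      hprim.pow hq1pos (by rw [hk, mul_comm])
    haveI : NeZero d := ⟨hdpos.ne'⟩
    have heq : Nat.card {lam : Fqˣ // lam ^ d = 1} = Fintype.card (rootsOfUnity d Fq) := by
      rw [Nat.card_eq_fintype_card]
      exact Fintype.card_congr (Equiv.subtypeEquivRight fun lam => by
        simp [mem_rootsOfUnity])
    rw [heq, ← Nat.card_eq_fintype_card, hprim'.card_rootsOfUnity']
  rw [← hcount]
  exact Nat.card_congr (Equiv.subtypeEquivRight hiff)
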